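/- arXiv:2002.06370 — 2 statements merged into one kernel-verified Lean document; each statement's English description precedes it below -/
import Mathlib

section
/- The imaginary part of η(z) = (z²−1)^{1/2} − z is strictly positive for every z ∈ ℂ ∖ ((−∞,−1]∪[1,∞)), where the branch of the square root is chosen so that η is analytic on this domain and η(0) = i. -/
open Complex

/-- The branch cut set `(-∞,-1] ∪ [1,∞)` viewed inside `ℂ`. -/
def pearceyCut : Set ℂ := {z : ℂ | z.im = 0 ∧ (z.re ≤ -1 ∨ 1 ≤ z.re)}

lemma cut_compl_pathConnected : IsPathConnected pearceyCutᶜ := by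
  refine ⟨0, by simp [pearceyCut], ?_⟩
  intro y hy
  simp only [Set.mem_compl_iff, pearceyCut, Set.mem_setOf_eq, not_and_or, not_or, not_le] at hy
  have h1 : JoinedIn pearceyCutᶜ 0 ((y.im : ℂ) * Complex.I) := by
    have hsub : segment ℝ (0 : ℂ) ((y.im : ℂ) * Complex.I) ⊆ pearceyCutᶜ := by
      intro w hw
      rcases hw with ⟨u, v, hu, hv, huv, rfl⟩
      simp only [Set.mem_compl_iff, pearceyCut, Set.mem_setOf_eq, not_and_or, not_or, not_le]
      right
      constructor <;> · simp [Complex.real_smul]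
    exact ((convex_segment (𝕜 := ℝ) (0 : ℂ) ((y.im : ℂ) * Complex.I)).isPathConnected ⟨_, left_mem_segment ℝ _ _⟩).joinedIn
      _ (left_mem_segment ℝ _ _) _ (right_mem_segment ℝ _ _) |>.mono hsub
  have h2 : JoinedIn pearceyCutᶜ ((y.im : ℂ) * Complex.I) y := by
    have hsub : segment ℝ ((y.im : ℂ) * Complex.I) y ⊆ pearceyCutᶜ := by
      intro w hw
      rcases hw with ⟨u, v, hu, hv, huv, rfl⟩
      simp only [Set.mem_compl_iff, pearceyCut, Set.mem_setOf_eq, not_and_or, not_or, not_le]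
      have him : (u • ((y.im : ℂ) * Complex.I) + v • y).im = y.im := by
        simp only [Complex.add_im, Complex.real_smul, Complex.mul_im, Complex.ofReal_re,
          Complex.ofReal_im, Complex.I_re, Complex.I_im, Complex.mul_re]
        ring_nf
        linear_combination y.im * huv
      have hre : (u • ((y.im : ℂ) * Complex.I) + v • y).re = v * y.re := by
        simp [Complex.real_smul]
      rcases hy with hy | hy
      · left; rw [him]; exact hy
      · by_cases hyim : y.im = 0
        · right; rw [hre]
          rcases hy with ⟨ha, hb⟩
          constructor
          · nlinarith
          · nlinarith
        · left; rw [him]; exact hyim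
    exact ((convex_segment (𝕜 := ℝ) ((y.im : ℂ) * Complex.I) y).isPathConnected ⟨_, left_mem_segment ℝ _ _⟩).joinedIn
      _ (left_mem_segment ℝ _ _) _ (right_mem_segment ℝ _ _) |>.mono hsub
  exact h1.trans h2

/-- the analytic branch of `η(z) = (z²-1)^{1/2} - z` on
`ℂ ∖ ((-∞,-1] ∪ [1,∞))` with `η(0) = i` has strictly positive imaginary part. -/
theorem eta_im_pos (η : ℂ → ℂ)
    (hdiff : DifferentiableOn ℂ η pearceyCutᶜ)
    (hquad : ∀ z ∈ pearceyCutᶜ, η z ^ 2 + 2 * z * η z + 1 = 0)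
    (h0 : η 0 = Complex.I) :
    ∀ z ∈ pearceyCutᶜ, 0 < (η z).im := by
  have hcont : ContinuousOn (fun z => (η z).im) pearceyCutᶜ :=
    Complex.continuous_im.comp_continuousOn hdiff.continuousOn
  have hne : ∀ z ∈ pearceyCutᶜ, (η z).im ≠ 0 := by
    intro z hz him
    have hq := hquad z hz
    rw [Complex.ext_iff] at hq
    obtain ⟨hre, himq⟩ := hq
    simp only [Complex.add_re, Complex.add_im, Complex.mul_re, Complex.mul_im,
      Complex.one_re, Complex.one_im, Complex.zero_re, Complex.zero_im, pow_two,
      him, Complex.re_ofNat, Complex.im_ofNat] at hre himq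
    ring_nf at hre himq
    -- hre : 1 + (η z).re * z.re * 2 + (η z).re ^ 2 = 0
    -- himq : (η z).re * z.im * 2 = 0
    have hane : (η z).re ≠ 0 := by
      intro h; rw [h] at hre; nlinarith
    have hzim : z.im = 0 := by
      rcases mul_eq_zero.1 (by linarith : (η z).re * z.im = 0) with h | h
      · exact absurd h hane
      · exact h
    apply hz
    refine ⟨hzim, ?_⟩
    rcases lt_trichotomy (η z).re 0 with hlt | heq | hgt
    · right; nlinarith [sq_nonneg ((η z).re + 1)]
    · exact absurd heq hane
    · left; nlinarith [sq_nonneg ((η z).re - 1)]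
  have h0mem : (0 : ℂ) ∈ pearceyCutᶜ := by simp [pearceyCut]
  intro z hz
  by_contra hle
  push_neg at hle
  have hlt : (η z).im < 0 := lt_of_le_of_ne hle (hne z hz)
  have hpre := (cut_compl_pathConnected.isConnected.isPreconnected).image _ hcont
  have hord := hpre.ordConnected
  have h01 : (1 : ℝ) ∈ (fun z => (η z).im) '' pearceyCutᶜ :=
    ⟨0, h0mem, by simp only []; rw [show η 0 = Complex.I from h0]; simp⟩
  have hmemz : (η z).im ∈ (fun z => (η z).im) '' pearceyCutᶜ := ⟨z, hz, rfl⟩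
  have hmem : (0 : ℝ) ∈ (fun z => (η z).im) '' pearceyCutᶜ :=
    hord.out hmemz h01 ⟨le_of_lt hlt, by norm_num⟩
  obtain ⟨w, hw, hw0⟩ := hmem
  exact hne w hw hw0
end

section
/- The function w₁(z) = ω^{−1} η(z)^{1/3} + ω η(z)^{−1/3}, where η(z) = (z²−1)^{1/2} − z with arg η(z) ∈ (0,π) and ω = e^{2πi/3}, is odd: w₁(−z) = −w₁(z) for all z ∈ ℂ ∖ ((−∞,−1]∪[1,∞)). -/
open Complex

/-- `w₁(z) = ω⁻¹ η(z)^{1/3} + ω η(z)^{-1/3}` is odd on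
`ℂ ∖ ((-∞,-1] ∪ [1,∞))`, where `η` is the branch of `(z²-1)^{1/2} - z` with
`Im η > 0` and `ω = e^{2πi/3}`; cube roots are principal. -/
theorem w1_odd (η : ℂ → ℂ)
    (hquad : ∀ z : ℂ, z ∉ pearceyCut → η z ^ 2 + 2 * z * η z + 1 = 0)
    (him : ∀ z : ℂ, z ∉ pearceyCut → 0 < (η z).im) :
    ∀ z : ℂ, z ∉ pearceyCut →
      (Complex.exp (2 * Real.pi * Complex.I / 3))⁻¹ * η (-z) ^ ((1 : ℂ) / 3)
        + Complex.exp (2 * Real.pi * Complex.I / 3) * (η (-z) ^ ((1 : ℂ) / 3))⁻¹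
      = -((Complex.exp (2 * Real.pi * Complex.I / 3))⁻¹ * η z ^ ((1 : ℂ) / 3)
        + Complex.exp (2 * Real.pi * Complex.I / 3) * (η z ^ ((1 : ℂ) / 3))⁻¹) := by
  intro z hz
  have hz' : -z ∉ pearceyCut := by
    intro h
    apply hz
    obtain ⟨h1, h2⟩ := h
    refine ⟨by simpa using h1, ?_⟩
    simp only [neg_re] at h2
    rcases h2 with h2 | h2
    · right; linarith
    · left; linarith
  set a := η z with ha
  set b := η (-z) with hbdef
  have hqa : a ^ 2 + 2 * z * a + 1 = 0 := hquad z hz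
  have hqb : b ^ 2 + 2 * (-z) * b + 1 = 0 := hquad (-z) hz'
  have haim : 0 < a.im := him z hz
  have hbim : 0 < b.im := him (-z) hz'
  have ha0 : a ≠ 0 := fun h => by simp [h] at hqa
  have hb0 : b ≠ 0 := fun h => by simp [h] at hqb
  set c : ℂ := -a⁻¹ with hcdef
  have hcim : 0 < c.im := by
    have : c.im = a.im / Complex.normSq a := by
      simp [hcdef, Complex.inv_im, neg_div]
    rw [this]
    exact div_pos haim (Complex.normSq_pos.2 ha0)
  have hc0 : c ≠ 0 := fun h => by simp [h] at hcim
  have hic : a * c = -1 := by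
    rw [hcdef, mul_neg, mul_inv_cancel₀ ha0]
  have hqc : c ^ 2 + 2 * (-z) * c + 1 = 0 := by
    linear_combination c ^ 2 * hqa + (1 - a * c - 2 * z * c) * hic
  -- b = c
  have hb : b = c := by
    have key : (b - c) * (b + c - 2 * z) = 0 := by linear_combination hqb - hqc
    rcases mul_eq_zero.1 key with h | h
    · exact sub_eq_zero.1 h
    · exfalso
      have hprod : b * c = 1 := by
        have hbval : b = 2 * z - c := by linear_combination h
        linear_combination c * hbval - hqc
      have hbinv : b = c⁻¹ := by
        field_simp at hprod ⊢
        linear_combination hprod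
      have : b.im < 0 := by
        rw [hbinv, Complex.inv_im]
        have : 0 < Complex.normSq c := Complex.normSq_pos.2 hc0
        exact div_neg_of_neg_of_pos (by linarith) this
      linarith
  -- log identity
  have harg0 : 0 ≤ a.arg := Complex.arg_nonneg_iff.2 haim.le
  have hargpi : a.arg ≤ Real.pi := Complex.arg_le_pi a
  have hlog : Complex.log b = ↑Real.pi * I - Complex.log a := by
    rw [hb]
    have hexp : c = Complex.exp (↑Real.pi * I - Complex.log a) := by
      rw [Complex.exp_sub, Complex.exp_pi_mul_I, Complex.exp_log ha0, hcdef]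
      field_simp
    rw [hexp, Complex.log_exp]
    · simp only [sub_im, mul_im, I_im, I_re, ofReal_re, ofReal_im, Complex.log_im]
      nlinarith [Real.pi_pos]
    · simp only [sub_im, mul_im, I_im, I_re, ofReal_re, ofReal_im, Complex.log_im]
      nlinarith [Real.pi_pos]
  have hcube : b ^ ((1:ℂ)/3) = Complex.exp (↑Real.pi * I / 3) * (a ^ ((1:ℂ)/3))⁻¹ := by
    rw [Complex.cpow_def_of_ne_zero hb0, Complex.cpow_def_of_ne_zero ha0, hlog,
      ← Complex.exp_neg, ← Complex.exp_add]
    congr 1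
    ring
  have hu0 : a ^ ((1:ℂ)/3) ≠ 0 := by
    rw [Complex.cpow_def_of_ne_zero ha0]; exact Complex.exp_ne_zero _
  set u := a ^ ((1:ℂ)/3) with hu
  set μ := Complex.exp (↑Real.pi * I / 3) with hμdef
  have hμ0 : μ ≠ 0 := Complex.exp_ne_zero _
  have hμ3 : μ ^ 3 = -1 := by
    rw [hμdef, ← Complex.exp_nat_mul]
    rw [show ((3 : ℕ) : ℂ) * (↑Real.pi * I / 3) = ↑Real.pi * I by push_cast; ring]
    exact Complex.exp_pi_mul_I
  have hω : Complex.exp (2 * ↑Real.pi * Complex.I / 3) = μ ^ 2 := by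
    rw [hμdef, ← Complex.exp_nat_mul]
    congr 1
    push_cast
    ring
  rw [hcube, hω]
  field_simp
  ring_nf
  linear_combination (μ + u ^ 2) * hμ3
end
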